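/- arXiv:1807.03884 — 2 statements merged into one kernel-verified Lean document; each statement's English description precedes it below -/
import Mathlib

section
/- Let p ≥ 5 be a prime, let k ≥ 2 and r ≥ 0 be integers, and let a, b, c, d ∈ ℤ be such that the binary cubic form f(x, y) = ax³ + bx²y + cxy² + dy³ is nondegenerate modulo p and p^r divides d; set d' = d/p^r. Then ∑ e^{2πi(aδ − bγ + cβ − d'α)/p^k} = 0, where the sum is over all (α, β, γ, δ) ∈ (ℤ/p^kℤ)⁴ satisfying αγ ≡ p^r β² (mod p^k), αδ ≡ p^r βγ (mod p^k), and γ² ≡ βδ (mod p^k). -/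
set_option autoImplicit false

/-!
Vanishing of the exponential sum
`∑ e^{2πi(aδ − bγ + cβ − d'α)/p^k}` over `(α,β,γ,δ) ∈ (ℤ/p^kℤ)⁴` with
`αγ ≡ p^rβ²`, `αδ ≡ p^rβγ`, `γ² ≡ βδ (mod p^k)`, for `p ≥ 5` prime, `k ≥ 2`,
`f(x,y) = ax³ + bx²y + cxy² + dy³` nondegenerate modulo `p`, `p^r ∣ d`, `d' = d/p^r`.
-/

/-- The binary cubic form with integer coefficients `(a, b, c, d)` is nondegenerate
modulo `p`: its reduction modulo `p` is nonzero and has no repeated linear factor over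
an algebraic closure of `𝔽_p` (i.e. it is not of the form `(αx + βy)²(γx + δy)`). -/
def NondegModP (p : ℕ) [Fact p.Prime] (a b c d : ℤ) : Prop :=
  ¬((a : ZMod p) = 0 ∧ (b : ZMod p) = 0 ∧ (c : ZMod p) = 0 ∧ (d : ZMod p) = 0) ∧
    ¬∃ α β γ δ : AlgebraicClosure (ZMod p),
        (a : AlgebraicClosure (ZMod p)) = α ^ 2 * γ ∧
        (b : AlgebraicClosure (ZMod p)) = α ^ 2 * δ + 2 * α * β * γ ∧
        (c : AlgebraicClosure (ZMod p)) = 2 * α * β * δ + β ^ 2 * γ ∧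
        (d : AlgebraicClosure (ZMod p)) = β ^ 2 * δ


set_option maxHeartbeats 1000000

noncomputable def eC (p k : ℕ) (x : ZMod (p ^ k)) : ℂ :=
  Complex.exp (2 * Real.pi * Complex.I * ((x.val : ℂ) / ((p : ℂ) ^ k)))

lemma pk_ne_zero_c (p k : ℕ) [NeZero (p ^ k)] : ((p : ℂ) ^ k) ≠ 0 := by
  have h : (p ^ k : ℕ) ≠ 0 := NeZero.ne _
  have : ((p ^ k : ℕ) : ℂ) ≠ 0 := Nat.cast_ne_zero.mpr h
  simpa using this

lemma exp_congr_mod (p k : ℕ) [NeZero (p ^ k)] (m n : ℕ) (h : m % p ^ k = n % p ^ k) :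
    Complex.exp (2 * Real.pi * Complex.I * ((m : ℂ) / ((p : ℂ) ^ k))) =
      Complex.exp (2 * Real.pi * Complex.I * ((n : ℂ) / ((p : ℂ) ^ k))) := by
  have hn := pk_ne_zero_c p k
  have key : ∀ s : ℕ, Complex.exp (2 * Real.pi * Complex.I * ((s : ℂ) / ((p : ℂ) ^ k))) =
      Complex.exp (2 * Real.pi * Complex.I * (((s % p ^ k : ℕ) : ℂ) / ((p : ℂ) ^ k))) := by
    intro s
    obtain ⟨q, hq⟩ : ∃ q : ℕ, s = s % p ^ k + p ^ k * q := ⟨s / p ^ k, (Nat.mod_add_div s (p ^ k)).symm⟩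
    have hs : (s : ℂ) = ((s % p ^ k : ℕ) : ℂ) + ((p : ℂ) ^ k) * (q : ℂ) := by
      have := congrArg (Nat.cast (R := ℂ)) hq
      push_cast at this
      linear_combination this
    rw [hs, show 2 * Real.pi * Complex.I *
        ((((s % p ^ k : ℕ) : ℂ) + ((p : ℂ) ^ k) * (q : ℂ)) / ((p : ℂ) ^ k)) =
        2 * Real.pi * Complex.I * (((s % p ^ k : ℕ) : ℂ) / ((p : ℂ) ^ k)) +
          ((q : ℤ) : ℂ) * (2 * Real.pi * Complex.I) by push_cast; field_simp,
      Complex.exp_add, Complex.exp_int_mul_two_pi_mul_I, mul_one]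
  rw [key m, key n, h]

lemma eC_add (p k : ℕ) [NeZero (p ^ k)] (x y : ZMod (p ^ k)) :
    eC p k (x + y) = eC p k x * eC p k y := by
  rw [eC, eC, eC, ← Complex.exp_add,
    show 2 * Real.pi * Complex.I * ((x.val : ℂ) / ((p : ℂ) ^ k)) +
      2 * Real.pi * Complex.I * ((y.val : ℂ) / ((p : ℂ) ^ k)) =
      2 * Real.pi * Complex.I * (((x.val + y.val : ℕ) : ℂ) / ((p : ℂ) ^ k)) by push_cast; ring]
  exact exp_congr_mod p k _ _ (by rw [ZMod.val_add]; exact Nat.mod_mod_of_dvd _ dvd_rfl)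

lemma two_pi_I_ne_zero : (2 * Real.pi * Complex.I : ℂ) ≠ 0 := by
  simp [Real.pi_ne_zero, Complex.I_ne_zero, Complex.ofReal_ne_zero]

lemma eC_eq_one (p k : ℕ) [NeZero (p ^ k)] (x : ZMod (p ^ k)) (h : eC p k x = 1) : x = 0 := by
  have hn := pk_ne_zero_c p k
  rw [eC, Complex.exp_eq_one_iff] at h
  obtain ⟨t, ht⟩ := h
  have h2 : ((x.val : ℂ) / ((p : ℂ) ^ k)) = (t : ℂ) := by
    have := mul_left_cancel₀ two_pi_I_ne_zero
      (show 2 * Real.pi * Complex.I * ((x.val : ℂ) / ((p : ℂ) ^ k))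
          = 2 * Real.pi * Complex.I * (t : ℂ) by rw [ht]; ring)
    exact this
  obtain ⟨v, hv⟩ : ∃ v : ℕ, x.val = v := ⟨x.val, rfl⟩
  rw [hv] at h2
  have h3 : (v : ℂ) = (t : ℂ) * ((p : ℂ) ^ k) := by field_simp at h2; linear_combination h2
  have h4 : (v : ℤ) = t * ((p : ℤ) ^ k) := by exact_mod_cast h3
  have h5 : (p ^ k : ℕ) ∣ v := by
    have : ((p ^ k : ℕ) : ℤ) ∣ (v : ℤ) := ⟨t, by push_cast; linarith [h4]⟩
    exact_mod_cast this
  have h6 : x.val = 0 := by rw [hv]; exact Nat.eq_zero_of_dvd_of_lt h5 (hv ▸ ZMod.val_lt x)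
  exact (ZMod.val_eq_zero x).mp h6

lemma Pmul_eq_zero_iff (p k : ℕ) [Fact p.Prime] [NeZero (p ^ k)] (hk : 2 ≤ k) (x : ZMod (p ^ k)) :
    (p : ZMod (p ^ k)) ^ (k - 1) * x = 0 ↔
      (ZMod.castHom (dvd_pow_self p (by omega : k ≠ 0)) (ZMod p)) x = 0 := by
  have hx : ((x.val : ℕ) : ZMod (p ^ k)) = x := ZMod.natCast_rightInverse x
  have hL : (p : ZMod (p ^ k)) ^ (k - 1) * x = ((p ^ (k - 1) * x.val : ℕ) : ZMod (p ^ k)) := by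
    conv_lhs => rw [← hx]
    push_cast; ring
  have hR : (ZMod.castHom (dvd_pow_self p (by omega : k ≠ 0)) (ZMod p)) x = ((x.val : ℕ) : ZMod p) := by
    rw [← hx]; simp
  rw [hL, hR, ZMod.natCast_eq_zero_iff, ZMod.natCast_eq_zero_iff]
  have hk' : p ^ k = p ^ (k - 1) * p := by
    rw [← pow_succ]; congr 1; omega
  constructor
  · intro h
    have h2 : p ^ (k - 1) * p ∣ p ^ (k - 1) * x.val := dvd_trans hk'.symm.dvd h
    exact (Nat.mul_dvd_mul_iff_left (Nat.pow_pos (Fact.out (p := p.Prime)).pos)).mp h2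
  · intro h
    have h2 : p ^ (k - 1) * p ∣ p ^ (k - 1) * x.val := Nat.mul_dvd_mul_left _ h
    exact dvd_trans hk'.dvd h2

lemma PP_eq_zero (p k : ℕ) [NeZero (p ^ k)] (hk : 2 ≤ k) :
    (p : ZMod (p ^ k)) ^ (k - 1) * (p : ZMod (p ^ k)) ^ (k - 1) = 0 := by
  have h : (p : ZMod (p ^ k)) ^ k = 0 := by
    have : ((p ^ k : ℕ) : ZMod (p ^ k)) = 0 := ZMod.natCast_self _
    push_cast at this; exact this
  have : (p : ZMod (p ^ k)) ^ (k - 1) * (p : ZMod (p ^ k)) ^ (k - 1)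
      = (p : ZMod (p ^ k)) ^ k * (p : ZMod (p ^ k)) ^ (k - 2) := by
    rw [← pow_add, ← pow_add]; congr 1; omega
  rw [this, h, zero_mul]

lemma pi_lift (p k : ℕ) [Fact p.Prime] [NeZero (p ^ k)] (hk : 2 ≤ k) (y : ZMod p) :
    (ZMod.castHom (dvd_pow_self p (by omega : k ≠ 0)) (ZMod p)) ((y.val : ℕ) : ZMod (p ^ k)) = y := by
  rw [map_natCast]
  exact ZMod.natCast_rightInverse y

lemma pi_P (p k : ℕ) [Fact p.Prime] [NeZero (p ^ k)] (hk : 2 ≤ k) :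
    (ZMod.castHom (dvd_pow_self p (by omega : k ≠ 0)) (ZMod p)) ((p : ZMod (p ^ k)) ^ (k - 1)) = 0 := by
  rw [map_pow, map_natCast, ZMod.natCast_self, zero_pow (by omega : k - 1 ≠ 0)]

lemma nondeg_fp2 (p : ℕ) [Fact p.Prime] (a b c d : ℤ) (hnd : NondegModP p a b c d)
    (s t u v : ZMod p) (h1 : (a : ZMod p) = s ^ 2 * u)
    (h2 : (b : ZMod p) = s ^ 2 * v + 2 * s * t * u)
    (h3 : (c : ZMod p) = 2 * s * t * v + t ^ 2 * u)
    (h4 : (d : ZMod p) = t ^ 2 * v) : False := by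
  apply hnd.2
  set f := algebraMap (ZMod p) (AlgebraicClosure (ZMod p)) with hf
  refine ⟨f s, f t, f u, f v, ?_, ?_, ?_, ?_⟩
  · have := congrArg f h1
    simpa only [map_intCast, map_mul, map_pow] using this
  · have := congrArg f h2
    simpa only [map_intCast, map_mul, map_pow, map_add, map_ofNat] using this
  · have := congrArg f h3
    simpa only [map_intCast, map_mul, map_pow, map_add, map_ofNat] using this
  · have := congrArg f h4
    simpa only [map_intCast, map_mul, map_pow] using this

lemma exists_u (p : ℕ) [Fact p.Prime] (hp5 : 5 ≤ p) (r : ℕ) (a b c d d' : ℤ)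
    (hnd : NondegModP p a b c d) (hd : d = (p : ℤ) ^ r * d')
    (α β γ δ : ZMod p)
    (h1 : α * γ = (p : ZMod p) ^ r * β ^ 2)
    (h2 : α * δ = (p : ZMod p) ^ r * β * γ)
    (h3 : γ ^ 2 = β * δ) :
    ∃ u₁ u₂ u₃ u₄ : ZMod p,
      γ * u₁ - 2 * (p : ZMod p) ^ r * β * u₂ + α * u₃ = 0 ∧
      δ * u₁ - (p : ZMod p) ^ r * γ * u₂ - (p : ZMod p) ^ r * β * u₃ + α * u₄ = 0 ∧
      -(δ * u₂) + 2 * γ * u₃ - β * u₄ = 0 ∧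
      (a : ZMod p) * u₄ - (b : ZMod p) * u₃ + (c : ZMod p) * u₂ - (d' : ZMod p) * u₁ ≠ 0 := by
  have hp2 : (2 : ZMod p) ≠ 0 := by
    have h2' : ((2 : ℕ) : ZMod p) ≠ 0 := by
      rw [Ne, ZMod.natCast_eq_zero_iff]
      intro h; have := Nat.le_of_dvd (by norm_num) h; omega
    simpa using h2'
  set A := (a : ZMod p) with hA
  set B := (b : ZMod p) with hB
  set C := (c : ZMod p) with hC
  set D := (d : ZMod p) with hD
  set D' := (d' : ZMod p) with hD'
  rcases Nat.eq_zero_or_pos r with hr | hr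
  · -- r = 0
    have hρ : (p : ZMod p) ^ r = 1 := by rw [hr, pow_zero]
    have hdd : D = D' := by
      rw [hD, hD']; subst hr
      have : d = d' := by simpa using hd
      rw [this]
    rw [hρ] at h1 h2
    simp only [hρ]
    by_cases hα : α = 0
    · have hβ : β = 0 := by
        have : β ^ 2 = 0 := by rw [← one_mul (β^2), ← h1, hα, zero_mul]
        exact pow_eq_zero_iff (n := 2) (by norm_num) |>.mp this
      have hγ : γ = 0 := by
        have : γ ^ 2 = 0 := by rw [h3, hβ, zero_mul]
        exact pow_eq_zero_iff (n := 2) (by norm_num) |>.mp this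
      by_cases hδ : δ = 0
      · -- zero point
        by_cases ha : A ≠ 0
        · exact ⟨0, 0, 0, 1, by simp [hα, hβ, hγ], by simp [hα, hβ, hγ, hδ],
            by simp [hβ, hγ, hδ], by simpa using ha⟩
        by_cases hb : B ≠ 0
        · exact ⟨0, 0, 1, 0, by simp [hα, hγ], by simp [hα, hβ, hγ],
            by simp [hγ, hβ, hδ], by simpa using hb⟩
        by_cases hc : C ≠ 0
        · exact ⟨0, 1, 0, 0, by simp [hβ, hγ], by simp [hβ, hγ, hδ],
            by simp [hδ], by simpa using hc⟩
        by_cases hd0 : D' ≠ 0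
        · exact ⟨1, 0, 0, 0, by simp [hα, hγ], by simp [hα, hγ, hδ],
            by simp [hβ, hγ, hδ], by simpa using hd0⟩
        push_neg at ha hb hc hd0
        exact absurd (nondeg_fp2 p a b c d hnd 1 0 0 0 (by simp [← hA, ha])
          (by simp [← hB, hb]) (by simp [← hC, hc]) (by simp [← hD, hdd ▸ hd0])) id
      · -- (0,0,0,δ), δ ≠ 0
        by_cases ha : A ≠ 0
        · exact ⟨0, 0, 0, 1, by simp [hα, hβ, hγ], by simp [hα, hβ, hγ],
            by simp [hβ, hγ], by simpa using ha⟩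
        by_cases hb : B ≠ 0
        · exact ⟨0, 0, 1, 0, by simp [hα, hβ, hγ], by simp [hα, hβ, hγ],
            by simp [hγ, hβ], by simpa using hb⟩
        push_neg at ha hb
        exact absurd (nondeg_fp2 p a b c d hnd 0 1 C D (by simp [← hA, ha])
          (by simp [← hB, hb]) (by simp [← hC]) (by simp [← hD])) id
    · -- α ≠ 0
      set t := β * α⁻¹ with ht
      have hβ : β = t * α := by
        rw [ht, mul_assoc, inv_mul_cancel₀ hα, mul_one]
      have hγ : γ = t ^ 2 * α := by
        apply mul_left_cancel₀ hα
        rw [h1, hβ]; ring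
      have hδ : δ = t ^ 3 * α := by
        apply mul_left_cancel₀ hα
        rw [h2, hβ, hγ]; ring
      by_cases hu : A * t ^ 3 - B * t ^ 2 + C * t - D' ≠ 0
      · refine ⟨1, t, t ^ 2, t ^ 3, by rw [hβ, hγ]; ring, by rw [hβ, hγ, hδ]; ring,
          by rw [hβ, hγ, hδ]; ring, ?_⟩
        intro h; apply hu; linear_combination h
      · push_neg at hu
        by_cases hu' : 3 * A * t ^ 2 - 2 * B * t + C ≠ 0
        · refine ⟨0, 1, 2 * t, 3 * t ^ 2, by rw [hβ]; ring, by rw [hβ, hγ]; ring,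
            by rw [hβ, hγ, hδ]; ring, ?_⟩
          intro h; apply hu'; linear_combination h
        · push_neg at hu'
          exact absurd (nondeg_fp2 p a b c d hnd 1 t A (B - 2 * A * t)
            (by rw [← hA]; ring)
            (by rw [← hB]; ring)
            (by rw [← hC]; linear_combination hu')
            (by rw [← hD, hdd]; linear_combination -hu + t * hu')) id
  · -- r ≥ 1
    have hρ : (p : ZMod p) ^ r = 0 := by
      rw [ZMod.natCast_self, zero_pow (by omega : r ≠ 0)]
    have hD0 : D = 0 := by
      rw [hD, hd]; push_cast
      rw [ZMod.natCast_self, zero_pow (by omega : r ≠ 0), zero_mul]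
    rw [hρ] at h1 h2
    have h1' : α * γ = 0 := by linear_combination h1
    have h2' : α * δ = 0 := by linear_combination h2
    simp only [hρ]
    by_cases hc : C = 0
    · exact absurd (nondeg_fp2 p a b c d hnd 1 0 A B (by rw [← hA]; ring)
        (by rw [← hB]; ring) (by rw [← hC, hc]; ring) (by rw [← hD, hD0]; ring)) id
    · by_cases hδ : δ = 0
      · exact ⟨0, 1, 0, 0, by ring, by ring, by rw [hδ]; ring, by
          intro h; exact hc (by linear_combination h)⟩
      · have hα : α = 0 := by
          rcases mul_eq_zero.mp h2' with h | h
          · exact h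
          · exact absurd h hδ
        by_cases hg : 2 * C * γ - B * δ ≠ 0
        · refine ⟨0, 2 * γ, δ, 0, by rw [hα]; ring, by rw [hα]; ring, by ring, ?_⟩
          intro h; apply hg; linear_combination h
        · push_neg at hg
          by_cases ha' : A * δ - C * β ≠ 0
          · refine ⟨0, -β, 0, δ, by ring, by rw [hα]; ring, by ring, ?_⟩
            intro h; apply ha'; linear_combination h
          · push_neg at ha'
            by_cases hA0 : A = 0
            · have hβ : β = 0 := by
                have hcb : C * β = 0 := by linear_combination -ha' + δ * hA0
                exact (mul_eq_zero.mp hcb).resolve_left hc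
              have hγ0 : γ = 0 := by
                have hg2 : γ ^ 2 = 0 := by rw [h3, hβ, zero_mul]
                exact pow_eq_zero_iff (n := 2) (by norm_num) |>.mp hg2
              have hB0 : B = 0 := by
                have hbd : B * δ = 0 := by linear_combination -hg + 2 * C * hγ0
                exact (mul_eq_zero.mp hbd).resolve_right hδ
              exact absurd (nondeg_fp2 p a b c d hnd 0 1 C 0 (by rw [← hA, hA0]; ring)
                (by rw [← hB, hB0]; ring) (by rw [← hC]; ring) (by rw [← hD, hD0]; ring)) id
            · have h2A : (2 : ZMod p) * A ≠ 0 := mul_ne_zero hp2 hA0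
              have hB2 : B ^ 2 = 4 * A * C := by
                have hq : (B ^ 2 - 4 * A * C) * δ ^ 2 = 0 := by
                  linear_combination (-(B * δ) - 2 * C * γ) * hg + 4 * C ^ 2 * h3 - 4 * C * δ * ha'
                have := (mul_eq_zero.mp hq).resolve_right (pow_ne_zero 2 hδ)
                linear_combination this
              set s := B * ((2 : ZMod p) * A)⁻¹ with hs
              exact absurd (nondeg_fp2 p a b c d hnd 1 s A 0
                (by rw [← hA]; ring)
                (by rw [← hB, hs]; field_simp; ring)
                (by rw [← hC, hs]; linear_combination (-(((2 : ZMod p) * A)⁻¹ ^ 2 * A)) * hB2 - C * (2 * A * ((2 : ZMod p) * A)⁻¹ + 1) * (mul_inv_cancel₀ h2A))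
                (by rw [← hD, hD0]; ring)) id

abbrev Quad (n : ℕ) := ZMod n × ZMod n × ZMod n × ZMod n

noncomputable def Gfun (p k r : ℕ) (a b c d' : ℤ) (v : Quad (p ^ k)) : ℂ :=
  if v.1 * v.2.2.1 = (p : ZMod (p ^ k)) ^ r * v.2.1 ^ 2 ∧
      v.1 * v.2.2.2 = (p : ZMod (p ^ k)) ^ r * v.2.1 * v.2.2.1 ∧
      v.2.2.1 ^ 2 = v.2.1 * v.2.2.2 then
    eC p k ((a : ZMod (p ^ k)) * v.2.2.2 - (b : ZMod (p ^ k)) * v.2.2.1 +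
      (c : ZMod (p ^ k)) * v.2.1 - (d' : ZMod (p ^ k)) * v.1)
  else 0

def Psc (p k : ℕ) (w : Quad (p ^ k)) : Quad (p ^ k) :=
  ((p : ZMod (p ^ k)) ^ (k - 1) * w.1, (p : ZMod (p ^ k)) ^ (k - 1) * w.2.1,
    (p : ZMod (p ^ k)) ^ (k - 1) * w.2.2.1, (p : ZMod (p ^ k)) ^ (k - 1) * w.2.2.2)

lemma key_vanish (p : ℕ) [Fact p.Prime] (hp5 : 5 ≤ p) (k r : ℕ) [NeZero (p ^ k)] (hk : 2 ≤ k)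
    (a b c d d' : ℤ) (hnd : NondegModP p a b c d) (hd : d = (p : ℤ) ^ r * d')
    (v : Quad (p ^ k)) :
    ∑ w : Quad (p ^ k), Gfun p k r a b c d' (v + Psc p k w) = 0 := by
  set P := (p : ZMod (p ^ k)) ^ (k - 1) with hP
  set π := ZMod.castHom (dvd_pow_self p (by omega : k ≠ 0)) (ZMod p) with hπdef
  obtain ⟨vα, vβ, vγ, vδ⟩ := v
  have hPP : P * P = 0 := PP_eq_zero p k hk
  have hπP : π P = 0 := pi_P p k hk
  by_cases hcone : π vα * π vγ = (p : ZMod p) ^ r * (π vβ) ^ 2 ∧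
      π vα * π vδ = (p : ZMod p) ^ r * π vβ * π vγ ∧ (π vγ) ^ 2 = π vβ * π vδ
  · obtain ⟨u₁, u₂, u₃, u₄, hB1, hB2, hB3, hL⟩ :=
      exists_u p hp5 r a b c d d' hnd hd (π vα) (π vβ) (π vγ) (π vδ)
        hcone.1 hcone.2.1 hcone.2.2
    set U₁ : ZMod (p ^ k) := ((u₁.val : ℕ) : ZMod (p ^ k)) with hU₁
    set U₂ : ZMod (p ^ k) := ((u₂.val : ℕ) : ZMod (p ^ k)) with hU₂
    set U₃ : ZMod (p ^ k) := ((u₃.val : ℕ) : ZMod (p ^ k)) with hU₃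
    set U₄ : ZMod (p ^ k) := ((u₄.val : ℕ) : ZMod (p ^ k)) with hU₄
    have hπ1 : π U₁ = u₁ := pi_lift p k hk u₁
    have hπ2 : π U₂ = u₂ := pi_lift p k hk u₂
    have hπ3 : π U₃ = u₃ := pi_lift p k hk u₃
    have hπ4 : π U₄ = u₄ := pi_lift p k hk u₄
    have hPB1 : P * (vγ * U₁ - 2 * (p : ZMod (p ^ k)) ^ r * vβ * U₂ + vα * U₃) = 0 := by
      rw [hP, Pmul_eq_zero_iff p k hk]
      rw [show (ZMod.castHom (dvd_pow_self p (by omega : k ≠ 0)) (ZMod p)) = π from rfl]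
      simp only [map_add, map_sub, map_mul, map_pow, map_natCast, map_ofNat, hπ1, hπ2, hπ3]
      exact hB1
    have hPB2 : P * (vδ * U₁ - (p : ZMod (p ^ k)) ^ r * vγ * U₂
        - (p : ZMod (p ^ k)) ^ r * vβ * U₃ + vα * U₄) = 0 := by
      rw [hP, Pmul_eq_zero_iff p k hk]
      rw [show (ZMod.castHom (dvd_pow_self p (by omega : k ≠ 0)) (ZMod p)) = π from rfl]
      simp only [map_add, map_sub, map_mul, map_pow, map_natCast, map_ofNat, hπ1, hπ2, hπ3, hπ4]
      exact hB2
    have hPB3 : P * (-(vδ * U₂) + 2 * vγ * U₃ - vβ * U₄) = 0 := by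
      rw [hP, Pmul_eq_zero_iff p k hk]
      rw [show (ZMod.castHom (dvd_pow_self p (by omega : k ≠ 0)) (ZMod p)) = π from rfl]
      simp only [map_add, map_sub, map_mul, map_neg, map_ofNat, hπ2, hπ3, hπ4]
      exact hB3
    set La : ZMod (p ^ k) := (a : ZMod (p ^ k)) * U₄ - (b : ZMod (p ^ k)) * U₃ +
      (c : ZMod (p ^ k)) * U₂ - (d' : ZMod (p ^ k)) * U₁ with hLa
    have hLU : P * La ≠ 0 := by
      rw [hP, Ne, Pmul_eq_zero_iff p k hk]
      rw [show (ZMod.castHom (dvd_pow_self p (by omega : k ≠ 0)) (ZMod p)) = π from rfl]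
      rw [hLa]
      simp only [map_add, map_sub, map_mul, map_intCast, hπ1, hπ2, hπ3, hπ4]
      exact hL
    set ε : ℂ := eC p k (P * La) with hε
    have hε1 : ε ≠ 1 := fun h => hLU (eC_eq_one p k _ h)
    set U : Quad (p ^ k) := (U₁, U₂, U₃, U₄) with hU
    have hre : ∑ w : Quad (p ^ k), Gfun p k r a b c d' ((vα, vβ, vγ, vδ) + Psc p k (w + U))
        = ∑ w : Quad (p ^ k), Gfun p k r a b c d' ((vα, vβ, vγ, vδ) + Psc p k w) := by
      have := Equiv.sum_comp (Equiv.addRight U)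
        (fun w => Gfun p k r a b c d' ((vα, vβ, vγ, vδ) + Psc p k w))
      simpa using this
    have hpt : ∀ w : Quad (p ^ k),
        Gfun p k r a b c d' ((vα, vβ, vγ, vδ) + Psc p k (w + U))
        = ε * Gfun p k r a b c d' ((vα, vβ, vγ, vδ) + Psc p k w) := by
      rintro ⟨w₁, w₂, w₃, w₄⟩
      rw [Gfun, Gfun]
      simp only [Psc, Prod.mk_add_mk, hU]
      have hiff1 : ((vα + P * (w₁ + U₁)) * (vγ + P * (w₃ + U₃))
            = (p : ZMod (p ^ k)) ^ r * (vβ + P * (w₂ + U₂)) ^ 2)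
          ↔ ((vα + P * w₁) * (vγ + P * w₃) = (p : ZMod (p ^ k)) ^ r * (vβ + P * w₂) ^ 2) := by
        constructor <;> intro h
        · linear_combination h - hPB1 - (w₁ * U₃ + w₃ * U₁ + U₁ * U₃
            - (p : ZMod (p ^ k)) ^ r * (2 * w₂ * U₂ + U₂ ^ 2)) * hPP
        · linear_combination h + hPB1 + (w₁ * U₃ + w₃ * U₁ + U₁ * U₃
            - (p : ZMod (p ^ k)) ^ r * (2 * w₂ * U₂ + U₂ ^ 2)) * hPP
      have hiff2 : ((vα + P * (w₁ + U₁)) * (vδ + P * (w₄ + U₄))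
            = (p : ZMod (p ^ k)) ^ r * (vβ + P * (w₂ + U₂)) * (vγ + P * (w₃ + U₃)))
          ↔ ((vα + P * w₁) * (vδ + P * w₄)
            = (p : ZMod (p ^ k)) ^ r * (vβ + P * w₂) * (vγ + P * w₃)) := by
        constructor <;> intro h
        · linear_combination h - hPB2 - (w₁ * U₄ + w₄ * U₁ + U₁ * U₄
            - (p : ZMod (p ^ k)) ^ r * (w₂ * U₃ + w₃ * U₂ + U₂ * U₃)) * hPP
        · linear_combination h + hPB2 + (w₁ * U₄ + w₄ * U₁ + U₁ * U₄
            - (p : ZMod (p ^ k)) ^ r * (w₂ * U₃ + w₃ * U₂ + U₂ * U₃)) * hPP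
      have hiff3 : ((vγ + P * (w₃ + U₃)) ^ 2 = (vβ + P * (w₂ + U₂)) * (vδ + P * (w₄ + U₄)))
          ↔ ((vγ + P * w₃) ^ 2 = (vβ + P * w₂) * (vδ + P * w₄)) := by
        constructor <;> intro h
        · linear_combination h - hPB3 - (2 * w₃ * U₃ + U₃ ^ 2
            - (w₂ * U₄ + w₄ * U₂ + U₂ * U₄)) * hPP
        · linear_combination h + hPB3 + (2 * w₃ * U₃ + U₃ ^ 2
            - (w₂ * U₄ + w₄ * U₂ + U₂ * U₄)) * hPP
      rw [if_congr (and_congr hiff1 (and_congr hiff2 hiff3)) rfl rfl]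
      by_cases hcnd : ((vα + P * w₁) * (vγ + P * w₃)
            = (p : ZMod (p ^ k)) ^ r * (vβ + P * w₂) ^ 2) ∧
          ((vα + P * w₁) * (vδ + P * w₄)
            = (p : ZMod (p ^ k)) ^ r * (vβ + P * w₂) * (vγ + P * w₃)) ∧
          ((vγ + P * w₃) ^ 2 = (vβ + P * w₂) * (vδ + P * w₄))
      · simp only [← hP, if_pos hcnd]
        rw [show (a : ZMod (p ^ k)) * (vδ + P * (w₄ + U₄)) - (b : ZMod (p ^ k)) * (vγ + P * (w₃ + U₃))
            + (c : ZMod (p ^ k)) * (vβ + P * (w₂ + U₂)) - (d' : ZMod (p ^ k)) * (vα + P * (w₁ + U₁))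
            = P * La + ((a : ZMod (p ^ k)) * (vδ + P * w₄) - (b : ZMod (p ^ k)) * (vγ + P * w₃)
            + (c : ZMod (p ^ k)) * (vβ + P * w₂) - (d' : ZMod (p ^ k)) * (vα + P * w₁)) by
          rw [hLa]; ring]
        rw [eC_add, hε]
      · simp only [← hP, if_neg hcnd, mul_zero]
    have hT : (∑ w : Quad (p ^ k), Gfun p k r a b c d' ((vα, vβ, vγ, vδ) + Psc p k w))
        = ε * ∑ w : Quad (p ^ k), Gfun p k r a b c d' ((vα, vβ, vγ, vδ) + Psc p k w) :=
      calc ∑ w : Quad (p ^ k), Gfun p k r a b c d' ((vα, vβ, vγ, vδ) + Psc p k w)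
          = ∑ w : Quad (p ^ k), Gfun p k r a b c d' ((vα, vβ, vγ, vδ) + Psc p k (w + U)) :=
            hre.symm
        _ = ∑ w : Quad (p ^ k), ε * Gfun p k r a b c d' ((vα, vβ, vγ, vδ) + Psc p k w) :=
            Finset.sum_congr rfl (fun w _ => hpt w)
        _ = ε * ∑ w : Quad (p ^ k), Gfun p k r a b c d' ((vα, vβ, vγ, vδ) + Psc p k w) := by
            rw [Finset.mul_sum]
    have h0 : (ε - 1) * (∑ w : Quad (p ^ k), Gfun p k r a b c d' ((vα, vβ, vγ, vδ) + Psc p k w))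
        = 0 := by linear_combination -hT
    rcases mul_eq_zero.mp h0 with h | h
    · exact absurd (by linear_combination h : ε = 1) hε1
    · exact h
  · apply Finset.sum_eq_zero
    rintro ⟨w₁, w₂, w₃, w₄⟩ _
    rw [Gfun, if_neg]
    rintro ⟨hc1, hc2, hc3⟩
    simp only [Psc, Prod.mk_add_mk] at hc1 hc2 hc3
    apply hcone
    refine ⟨?_, ?_, ?_⟩
    · have := congrArg π hc1
      simpa only [map_add, map_mul, map_pow, map_natCast, hπP, ZMod.natCast_self, zero_pow (by omega : k - 1 ≠ 0), zero_mul, add_zero] using this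
    · have := congrArg π hc2
      simpa only [map_add, map_mul, map_pow, map_natCast, hπP, ZMod.natCast_self, zero_pow (by omega : k - 1 ≠ 0), zero_mul, add_zero] using this
    · have := congrArg π hc3
      simpa only [map_add, map_mul, map_pow, map_natCast, hπP, ZMod.natCast_self, zero_pow (by omega : k - 1 ≠ 0), zero_mul, add_zero] using this


/-- Let `p ≥ 5` be prime, `k ≥ 2`, `r ≥ 0`, and `a, b, c, d ∈ ℤ` with
`ax³ + bx²y + cxy² + dy³` nondegenerate modulo `p`, `p^r ∣ d` and `d' = d/p^r`.  Then
`∑ e^{2πi(aδ − bγ + cβ − d'α)/p^k} = 0`, the sum over `(α, β, γ, δ) ∈ (ℤ/p^kℤ)⁴` with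
`αγ ≡ p^rβ²`, `αδ ≡ p^rβγ` and `γ² ≡ βδ (mod p^k)`. -/
theorem exponential_sum_vanishes (p : ℕ) [Fact p.Prime] (hp5 : 5 ≤ p)
    (k r : ℕ) [NeZero (p ^ k)] (hk : 2 ≤ k) (a b c d d' : ℤ)
    (hnd : NondegModP p a b c d) (hd : d = (p : ℤ) ^ r * d') :
    ∑ α : ZMod (p ^ k), ∑ β : ZMod (p ^ k), ∑ γ : ZMod (p ^ k), ∑ δ : ZMod (p ^ k),
        (if α * γ = (p : ZMod (p ^ k)) ^ r * β ^ 2 ∧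
            α * δ = (p : ZMod (p ^ k)) ^ r * β * γ ∧ γ ^ 2 = β * δ then
          Complex.exp (2 * Real.pi * Complex.I *
            ((((a : ZMod (p ^ k)) * δ - (b : ZMod (p ^ k)) * γ + (c : ZMod (p ^ k)) * β
                - (d' : ZMod (p ^ k)) * α).val : ℂ) / ((p : ℂ) ^ k)))
        else 0)
      = 0 := by
  classical
  have hrw : ∑ v : Quad (p ^ k), Gfun p k r a b c d' v
      = ∑ α : ZMod (p ^ k), ∑ β : ZMod (p ^ k), ∑ γ : ZMod (p ^ k), ∑ δ : ZMod (p ^ k),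
        (if α * γ = (p : ZMod (p ^ k)) ^ r * β ^ 2 ∧
            α * δ = (p : ZMod (p ^ k)) ^ r * β * γ ∧ γ ^ 2 = β * δ then
          Complex.exp (2 * Real.pi * Complex.I *
            ((((a : ZMod (p ^ k)) * δ - (b : ZMod (p ^ k)) * γ + (c : ZMod (p ^ k)) * β
                - (d' : ZMod (p ^ k)) * α).val : ℂ) / ((p : ℂ) ^ k)))
        else 0) := by
    simp only [Fintype.sum_prod_type]
    rfl
  rw [← hrw]
  have key := key_vanish p hp5 k r hk a b c d d' hnd hd
  have shift : ∀ cc : Quad (p ^ k), ∑ v : Quad (p ^ k), Gfun p k r a b c d' (v + cc)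
      = ∑ v : Quad (p ^ k), Gfun p k r a b c d' v := by
    intro cc
    have := Equiv.sum_comp (Equiv.addRight cc) (Gfun p k r a b c d')
    simpa using this
  have H1 : ∑ w : Quad (p ^ k), ∑ v : Quad (p ^ k), Gfun p k r a b c d' (v + Psc p k w)
      = (Fintype.card (Quad (p ^ k))) • ∑ v : Quad (p ^ k), Gfun p k r a b c d' v :=
    calc ∑ w : Quad (p ^ k), ∑ v : Quad (p ^ k), Gfun p k r a b c d' (v + Psc p k w)
        = ∑ _w : Quad (p ^ k), ∑ v : Quad (p ^ k), Gfun p k r a b c d' v :=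
          Finset.sum_congr rfl (fun w _ => shift (Psc p k w))
      _ = (Fintype.card (Quad (p ^ k))) • ∑ v : Quad (p ^ k), Gfun p k r a b c d' v := by
          rw [Finset.sum_const, Finset.card_univ]
  have H2 : ∑ w : Quad (p ^ k), ∑ v : Quad (p ^ k), Gfun p k r a b c d' (v + Psc p k w)
      = ∑ v : Quad (p ^ k), ∑ w : Quad (p ^ k), Gfun p k r a b c d' (v + Psc p k w) :=
    Finset.sum_comm
  have H3 : ∑ v : Quad (p ^ k), ∑ w : Quad (p ^ k), Gfun p k r a b c d' (v + Psc p k w) = 0 :=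
    Finset.sum_eq_zero fun v _ => key v
  have H4 : ((Fintype.card (Quad (p ^ k)) : ℂ)) * ∑ v : Quad (p ^ k), Gfun p k r a b c d' v = 0 := by
    rw [← nsmul_eq_mul, ← H1, H2, H3]
  have hcard : ((Fintype.card (Quad (p ^ k)) : ℂ)) ≠ 0 :=
    Nat.cast_ne_zero.mpr Fintype.card_ne_zero
  exact (mul_eq_zero.mp H4).resolve_left hcard
end

section
/- Let p be a prime, let k ≥ 2 be an integer, and let g(x) ∈ ℤ[x] be a polynomial of degree at most 3 such that the reduction ḡ of g modulo p is nonzero and there is no γ₀ ∈ 𝔽_p with ḡ(γ₀) = 0 and ḡ'(γ₀) = 0. Then ∑_{δ ∈ (ℤ/p^kℤ)^×} ∑_{γ ∈ ℤ/p^kℤ} e^{2πi·δ·g(γ)/p^k} = 0. -/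
set_option autoImplicit false

open Finset Polynomial Complex

open scoped Classical

section Aux

variable {p k : ℕ}

lemma aux_pow_mul_eq_zero_iff (hp : p.Prime) (hk : 1 ≤ k) [NeZero (p ^ k)] (x : ZMod (p ^ k)) :
    (p : ZMod (p ^ k)) ^ (k - 1) * x = 0 ↔ p ∣ x.val := by
  have hpk : p ^ k = p ^ (k - 1) * p := by rw [← pow_succ]; congr 1; omega
  have hdvd : ∀ v : ℕ, (p ^ k ∣ p ^ (k - 1) * v ↔ p ∣ v) := by
    intro v
    rw [hpk, Nat.mul_dvd_mul_iff_left (pow_pos hp.pos _)]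
  conv_lhs => rw [← ZMod.natCast_zmod_val x]
  rw [show ((p : ZMod (p ^ k)) ^ (k - 1) * (x.val : ZMod (p ^ k)))
      = ((p ^ (k - 1) * x.val : ℕ) : ZMod (p ^ k)) by push_cast; ring]
  rw [ZMod.natCast_eq_zero_iff]
  exact hdvd x.val

lemma aux_isUnit_iff (hp : p.Prime) (hk : 1 ≤ k) [NeZero (p ^ k)] (x : ZMod (p ^ k)) :
    IsUnit x ↔ ¬ p ∣ x.val := by
  conv_lhs => rw [← ZMod.natCast_zmod_val x]
  rw [ZMod.isUnit_iff_coprime, Nat.coprime_pow_right_iff (by omega),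
    Nat.coprime_comm, Nat.Prime.coprime_iff_not_dvd hp]

lemma aux_nonunits_sum (hp : p.Prime) (hk : 2 ≤ k) [NeZero (p ^ k)] :
    ∑ x ∈ univ.filter (fun x : ZMod (p ^ k) => ¬ IsUnit x), ZMod.stdAddChar x
      = (0 : ℂ) := by
  haveI : NeZero (p ^ (k - 1)) := ⟨(pow_pos hp.pos _).ne'⟩
  haveI : Fact (1 < p ^ (k - 1)) := ⟨Nat.one_lt_pow (by omega) hp.one_lt⟩
  have hpk : p ^ k = p ^ (k - 1) * p := by rw [← pow_succ]; congr 1; omega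
  have hvj : ∀ y : ZMod (p ^ (k - 1)), ((p * y.val : ℕ) : ZMod (p ^ k)).val = p * y.val := by
    intro y
    rw [ZMod.val_natCast, Nat.mod_eq_of_lt]
    calc p * y.val < p * p ^ (k - 1) := by
          exact (Nat.mul_lt_mul_left hp.pos).mpr (ZMod.val_lt y)
      _ = p ^ k := by rw [hpk, mul_comm]
  have key : ∑ x ∈ univ.filter (fun x : ZMod (p ^ k) => ¬ IsUnit x), ZMod.stdAddChar x
      = ∑ y : ZMod (p ^ (k - 1)), ZMod.stdAddChar y := by
    refine Finset.sum_nbij' (fun x => ((x.val / p : ℕ) : ZMod (p ^ (k - 1))))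
      (fun y => ((p * y.val : ℕ) : ZMod (p ^ k))) (fun x _ => mem_univ _)
      (fun y _ => ?_) (fun x hx => ?_) (fun y _ => ?_) (fun x hx => ?_)
    · -- j y is a nonunit
      simp only [mem_filter, mem_univ, true_and]
      rw [aux_isUnit_iff hp (by omega), not_not, hvj]
      exact Dvd.intro _ rfl
    · -- left inverse
      simp only [mem_filter, mem_univ, true_and] at hx
      rw [aux_isUnit_iff hp (by omega), not_not] at hx
      have hlt : x.val / p < p ^ (k - 1) := by
        rw [Nat.div_lt_iff_lt_mul hp.pos, ← hpk]; exact ZMod.val_lt x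
      rw [ZMod.val_natCast, Nat.mod_eq_of_lt hlt, Nat.mul_div_cancel' hx,
        ZMod.natCast_zmod_val]
    · -- right inverse
      rw [hvj, Nat.mul_div_cancel_left _ hp.pos, ZMod.natCast_zmod_val]
    · -- values agree
      simp only [mem_filter, mem_univ, true_and] at hx
      rw [aux_isUnit_iff hp (by omega), not_not] at hx
      obtain ⟨m, hm⟩ := hx
      have hlt : x.val / p < p ^ (k - 1) := by
        rw [Nat.div_lt_iff_lt_mul hp.pos, ← hpk]; exact ZMod.val_lt x
      rw [ZMod.stdAddChar_apply, ZMod.toCircle_apply, ZMod.stdAddChar_apply,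
        ZMod.toCircle_apply, ZMod.val_natCast, Nat.mod_eq_of_lt hlt]
      congr 1
      have hm' : x.val / p = m := by rw [hm, Nat.mul_div_cancel_left _ hp.pos]
      rw [hm', hm]
      have hp0 : (p : ℂ) ≠ 0 := Nat.cast_ne_zero.mpr hp.pos.ne'
      have hq0 : ((p : ℂ)) ^ (k - 1) ≠ 0 := pow_ne_zero _ hp0
      rw [show k = (k - 1) + 1 by omega]
      push_cast [pow_succ]
      field_simp
  rw [key]
  have := AddChar.sum_mulShift (1 : ZMod (p ^ (k - 1))) (ZMod.isPrimitive_stdAddChar (p ^ (k - 1)))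
  simpa [one_ne_zero] using this

/-- The twisted sum of the standard character over units vanishes for `k ≥ 2`. -/
lemma aux_sum_units (hp : p.Prime) (hk : 2 ≤ k) [NeZero (p ^ k)] (a : ZMod (p ^ k))
    (ha : IsUnit a) :
    ∑ δ : (ZMod (p ^ k))ˣ, ZMod.stdAddChar ((δ : ZMod (p ^ k)) * a) = 0 := by
  haveI : Fact (1 < p ^ k) := ⟨Nat.one_lt_pow (by omega) hp.one_lt⟩
  have h1 : ∑ δ : (ZMod (p ^ k))ˣ, ZMod.stdAddChar ((δ : ZMod (p ^ k)) * a)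
      = ∑ δ : (ZMod (p ^ k))ˣ, ZMod.stdAddChar (δ : ZMod (p ^ k)) := by
    refine Fintype.sum_equiv (Equiv.mulRight ha.unit) _ _ fun δ => ?_
    simp [IsUnit.unit_spec]
  have h2 : ∑ δ : (ZMod (p ^ k))ˣ, ZMod.stdAddChar (δ : ZMod (p ^ k))
      = ∑ x ∈ univ.filter (fun x : ZMod (p ^ k) => IsUnit x), ZMod.stdAddChar x := by
    refine Finset.sum_nbij' (fun δ => (δ : ZMod (p ^ k)))
      (fun x => if h : IsUnit x then h.unit else 1) ?_ ?_ ?_ ?_ ?_ <;>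
      intro x hx <;> simp_all [Units.ext_iff]
  have htot : ∑ x : ZMod (p ^ k), ZMod.stdAddChar x = 0 := by
    have := AddChar.sum_mulShift (1 : ZMod (p ^ k)) (ZMod.isPrimitive_stdAddChar (p ^ k))
    simpa [one_ne_zero] using this
  have hsplit := Finset.sum_filter_add_sum_filter_not univ
    (fun x : ZMod (p ^ k) => IsUnit x) (fun x => ZMod.stdAddChar x)
  rw [htot, aux_nonunits_sum hp hk, add_zero] at hsplit
  rw [h1, h2, hsplit]

end Aux

section Gamma

variable {p k : ℕ}

lemma aux_gamma_filter (hp : p.Prime) (hk : 2 ≤ k) [NeZero (p ^ k)]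
    (G : Polynomial (ZMod (p ^ k))) (δ : (ZMod (p ^ k))ˣ) :
    ∑ γ : ZMod (p ^ k), ZMod.stdAddChar ((δ : ZMod (p ^ k)) * G.eval γ)
      = ∑ γ ∈ univ.filter
          (fun γ : ZMod (p ^ k) =>
            (p : ZMod (p ^ k)) ^ (k - 1) * G.derivative.eval γ = 0),
          ZMod.stdAddChar ((δ : ZMod (p ^ k)) * G.eval γ) := by
  set c : ZMod (p ^ k) := (p : ZMod (p ^ k)) ^ (k - 1) with hc
  have hc2 : c * c = 0 := by
    rw [hc, show ((p : ZMod (p ^ k)) ^ (k - 1) * (p : ZMod (p ^ k)) ^ (k - 1))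
        = ((p ^ (k - 1) * p ^ (k - 1) : ℕ) : ZMod (p ^ k)) by push_cast; ring,
      ZMod.natCast_eq_zero_iff, ← pow_add]
    exact pow_dvd_pow p (by omega)
  have expand : ∀ t γ : ZMod (p ^ k),
      ZMod.stdAddChar ((δ : ZMod (p ^ k)) * G.eval (γ + c * t))
        = ZMod.stdAddChar ((δ : ZMod (p ^ k)) * G.eval γ) *
          ZMod.stdAddChar (((δ : ZMod (p ^ k)) * (c * G.derivative.eval γ)) * t) := by
    intro t γ
    obtain ⟨q, hq⟩ := G.binomExpansion γ (c * t)
    have hz : q * (c * t) ^ 2 = 0 := by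
      have h1 : (c * t) ^ 2 = c * c * (t * t) := by ring
      rw [h1, hc2, zero_mul, mul_zero]
    rw [hq, hz, add_zero,
      show (δ : ZMod (p ^ k)) * (G.eval γ + G.derivative.eval γ * (c * t))
        = (δ : ZMod (p ^ k)) * G.eval γ
            + ((δ : ZMod (p ^ k)) * (c * G.derivative.eval γ)) * t by ring,
      AddChar.map_add_eq_mul]
  have hne : ((p ^ k : ℕ) : ℂ) ≠ 0 := Nat.cast_ne_zero.mpr (pow_pos hp.pos k).ne'
  apply mul_left_cancel₀ hne
  calc ((p ^ k : ℕ) : ℂ) * ∑ γ : ZMod (p ^ k), ZMod.stdAddChar ((δ : ZMod (p ^ k)) * G.eval γ)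
      = ∑ _t : ZMod (p ^ k), ∑ γ : ZMod (p ^ k),
          ZMod.stdAddChar ((δ : ZMod (p ^ k)) * G.eval γ) := by
        rw [Finset.sum_const, Finset.card_univ, ZMod.card, nsmul_eq_mul]
    _ = ∑ t : ZMod (p ^ k), ∑ γ : ZMod (p ^ k),
          ZMod.stdAddChar ((δ : ZMod (p ^ k)) * G.eval (γ + c * t)) := by
        refine Finset.sum_congr rfl fun t _ => ?_
        exact (Fintype.sum_equiv (Equiv.addRight (c * t)) _ _ fun γ => rfl).symm
    _ = ∑ γ : ZMod (p ^ k), ∑ t : ZMod (p ^ k),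
          ZMod.stdAddChar ((δ : ZMod (p ^ k)) * G.eval γ) *
            ZMod.stdAddChar (((δ : ZMod (p ^ k)) * (c * G.derivative.eval γ)) * t) := by
        rw [Finset.sum_comm]
        exact Finset.sum_congr rfl fun γ _ => Finset.sum_congr rfl fun t _ => expand t γ
    _ = ∑ γ : ZMod (p ^ k), ZMod.stdAddChar ((δ : ZMod (p ^ k)) * G.eval γ) *
          (if c * G.derivative.eval γ = 0 then ((p ^ k : ℕ) : ℂ) else 0) := by
        refine Finset.sum_congr rfl fun γ _ => ?_
        rw [← Finset.mul_sum]
        congr 1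
        have h := AddChar.sum_mulShift ((δ : ZMod (p ^ k)) * (c * G.derivative.eval γ))
          (ZMod.isPrimitive_stdAddChar (p ^ k))
        simp_rw [mul_comm _ ((δ : ZMod (p ^ k)) * (c * G.derivative.eval γ))] at h
        rw [h, ZMod.card]
        simp only [Units.mul_right_eq_zero, apply_ite (fun n : ℕ => (n : ℂ)), Nat.cast_zero]
    _ = ((p ^ k : ℕ) : ℂ) * ∑ γ ∈ univ.filter
          (fun γ : ZMod (p ^ k) =>
            (p : ZMod (p ^ k)) ^ (k - 1) * G.derivative.eval γ = 0),
          ZMod.stdAddChar ((δ : ZMod (p ^ k)) * G.eval γ) := by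
        rw [Finset.mul_sum, Finset.sum_filter]
        refine Finset.sum_congr rfl fun γ _ => ?_
        by_cases h : c * G.derivative.eval γ = 0 <;> simp [h, ← hc, mul_comm]

end Gamma

/-- Let `p` be prime, `k ≥ 2`, and `g ∈ ℤ[x]` of degree at most 3 such that the
reduction `ḡ` of `g` modulo `p` is nonzero and there is no `γ₀ ∈ 𝔽_p` with
`ḡ(γ₀) = 0 = ḡ'(γ₀)`.  Then `∑_{δ ∈ (ℤ/p^kℤ)^×} ∑_{γ ∈ ℤ/p^kℤ} e^{2πi·δ·g(γ)/p^k} = 0`. -/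
theorem exponential_sum_units_vanishes (p : ℕ) (hp : p.Prime) (k : ℕ) [NeZero (p ^ k)]
    (hk : 2 ≤ k) (g : Polynomial ℤ) (hdeg : g.natDegree ≤ 3)
    (hg0 : g.map (Int.castRingHom (ZMod p)) ≠ 0)
    (hsep : ¬∃ γ₀ : ZMod p,
      (g.map (Int.castRingHom (ZMod p))).eval γ₀ = 0 ∧
        ((g.map (Int.castRingHom (ZMod p))).derivative).eval γ₀ = 0) :
    ∑ δ : (ZMod (p ^ k))ˣ, ∑ γ : ZMod (p ^ k),
        Complex.exp (2 * Real.pi * Complex.I *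
          (((((δ : ZMod (p ^ k)) * (g.map (Int.castRingHom (ZMod (p ^ k)))).eval γ).val : ℂ))
            / ((p : ℂ) ^ k)))
      = 0 := by
  have hψ : ∀ x : ZMod (p ^ k),
      Complex.exp (2 * Real.pi * Complex.I * ((x.val : ℂ) / ((p : ℂ) ^ k)))
        = ZMod.stdAddChar x := by
    intro x
    rw [ZMod.stdAddChar_apply, ZMod.toCircle_apply]
    congr 1
    push_cast
    ring
  simp only [hψ]
  set G : Polynomial (ZMod (p ^ k)) := g.map (Int.castRingHom (ZMod (p ^ k))) with hG
  -- the reduction mod p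
  have hdvd : p ∣ p ^ k := dvd_pow_self p (by omega)
  set π : ZMod (p ^ k) →+* ZMod p := ZMod.castHom hdvd (ZMod p) with hπ
  have hdvdval : ∀ y : ZMod (p ^ k), p ∣ y.val ↔ π y = 0 := by
    intro y
    rw [hπ, ZMod.castHom_apply, ← ZMod.natCast_val, ZMod.natCast_eq_zero_iff]
  have hcomm : ∀ (q : Polynomial ℤ) (x : ZMod (p ^ k)),
      π ((q.map (Int.castRingHom (ZMod (p ^ k)))).eval x)
        = (q.map (Int.castRingHom (ZMod p))).eval (π x) := by
    intro q x
    rw [Polynomial.eval_map, Polynomial.eval_map, Polynomial.hom_eval₂]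
    congr 1
    exact RingHom.ext_int _ _
  rw [Finset.sum_congr rfl fun δ _ => aux_gamma_filter hp hk G δ, Finset.sum_comm]
  refine Finset.sum_eq_zero fun γ hγ => ?_
  simp only [mem_filter, mem_univ, true_and] at hγ
  -- the derivative of ḡ vanishes at π γ
  have hder : (g.map (Int.castRingHom (ZMod p))).derivative.eval (π γ) = 0 := by
    have h1 : p ∣ (G.derivative.eval γ).val :=
      (aux_pow_mul_eq_zero_iff hp (by omega) _).mp hγ
    rw [hdvdval] at h1
    rw [hG] at h1
    rw [Polynomial.derivative_map] at h1 ⊢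
    rw [hcomm g.derivative γ] at h1
    exact h1
  -- hence ḡ does not vanish at π γ
  have hval : (g.map (Int.castRingHom (ZMod p))).eval (π γ) ≠ 0 := by
    intro h
    exact hsep ⟨π γ, h, hder⟩
  -- so G.eval γ is a unit
  have hunit : IsUnit (G.eval γ) := by
    rw [aux_isUnit_iff hp (by omega)]
    rw [hdvdval, hG, hcomm g γ]
    exact hval
  exact aux_sum_units hp hk _ hunit
end
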